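/- Let H be a self-adjoint operator on a Hilbert space with H ≥ s (i.e., ⟨Hf, f⟩ ≥ s‖f‖² on the domain), and let A, B be orthogonal projections (multiplication by characteristic functions) such that for every t > 0 one has ‖A e^{−tH} B‖ ≤ e^{−ts} e^{−δ²/(4t)} for some δ > 0. Then for every E < s, setting η = s − E, one has ‖A (H − E)^{−1} B‖ ≤ (δ/√η)·K₁(δ√η), where K₁ is the modified Bessel function of the second kind of order 1; consequently ‖A (H − E)^{−1} B‖ ≤ √(π/2)·(√δ/η^{3/4} + 3/(8√δ·η^{5/4}))·e^{−δ√η}. -/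

import Mathlib

open MeasureTheory Real Set

noncomputable def besselK1 (z : ℝ) : ℝ :=
  (z / 4) * ∫ t in Set.Ioi (0 : ℝ), (t : ℝ) ^ (-2 : ℤ) * Real.exp (-t - z ^ 2 / (4 * t))

noncomputable def Jint (z : ℝ) : ℝ := ∫ t in Set.Ioi (0:ℝ), Real.exp (-t - z^2/(4*t))

lemma aux_int {a c : ℝ} (ha : 0 < a) (hc : 0 ≤ c) :
    IntegrableOn (fun t : ℝ => Real.exp (-(a*t) - c/(4*t))) (Set.Ioi 0) := by
  apply Integrable.mono' (g := fun t : ℝ => Real.exp (-a * t))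
  · exact exp_neg_integrableOn_Ioi 0 ha
  · apply ContinuousOn.aestronglyMeasurable _ measurableSet_Ioi
    apply ContinuousOn.rexp
    apply ContinuousOn.sub (by fun_prop)
    exact continuousOn_const.div (by fun_prop) (fun t ht => by
      simp only [Set.mem_Ioi] at ht; positivity)
  · filter_upwards [ae_restrict_mem measurableSet_Ioi] with t ht
    simp only [Set.mem_Ioi] at ht
    rw [Real.norm_eq_abs, abs_of_pos (Real.exp_pos _), Real.exp_le_exp, neg_mul]
    have : 0 ≤ c/(4*t) := by positivity
    linarith

lemma Jint_integrable {z : ℝ} :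
    IntegrableOn (fun t : ℝ => Real.exp (-t - z^2/(4*t))) (Set.Ioi 0) := by
  have := aux_int (a := 1) (c := z^2) one_pos (sq_nonneg z)
  simpa using this

section E3
variable {z : ℝ} (hz : 0 < z)

lemma Jint_eq (hz : 0 < z) : Jint z =
    ∫ u in Set.Ioi (0:ℝ), Real.exp (-(z+u)) * ((u+z) / Real.sqrt (u^2 + 2*u*z)) := by
  set g : ℝ → ℝ := fun t => Real.exp (-t - z^2/(4*t)) with hg
  set r : ℝ → ℝ := fun u => Real.sqrt (u^2 + 2*u*z) with hrdef
  set fp : ℝ → ℝ := fun u => (z + u + r u)/2 with hfp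
  set fm : ℝ → ℝ := fun u => (z + u - r u)/2 with hfm
  -- basic facts about r
  have hrsq : ∀ u : ℝ, 0 < u → (r u)^2 = u^2 + 2*u*z := by
    intro u hu
    rw [hrdef]; exact Real.sq_sqrt (by positivity)
  have hrpos : ∀ u : ℝ, 0 < u → 0 < r u := by
    intro u hu; rw [hrdef]; exact Real.sqrt_pos.mpr (by positivity)
  have hrlt : ∀ u : ℝ, 0 < u → r u < u + z := by
    intro u hu
    have h1 : u^2 + 2*u*z < (u+z)^2 := by nlinarith
    calc r u = Real.sqrt (u^2+2*u*z) := rfl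
    _ < Real.sqrt ((u+z)^2) := by
        apply Real.sqrt_lt_sqrt (by positivity) h1
    _ = u + z := Real.sqrt_sq (by positivity)
  have hult : ∀ u : ℝ, 0 < u → u < r u := by
    intro u hu
    have : u = Real.sqrt (u^2) := (Real.sqrt_sq hu.le).symm
    rw [this, hrdef]
    exact Real.sqrt_lt_sqrt (by positivity) (by nlinarith)
  have hfppos : ∀ u : ℝ, 0 < u → 0 < fp u := by
    intro u hu; rw [hfp]; have := hrpos u hu; simp only; nlinarith
  have hfmpos : ∀ u : ℝ, 0 < u → 0 < fm u := by
    intro u hu; rw [hfm]; have := hrlt u hu; simp only; nlinarith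
  -- product identity
  have hprod : ∀ u : ℝ, 0 < u → fp u * fm u = z^2/4 := by
    intro u hu
    rw [hfp, hfm]; simp only
    have := hrsq u hu
    nlinarith
  have hkeyp : ∀ u : ℝ, 0 < u → z^2/(4 * fp u) = fm u := by
    intro u hu
    have h1 := hprod u hu
    have h2 := hfppos u hu
    field_simp
    nlinarith
  have hkeym : ∀ u : ℝ, 0 < u → z^2/(4 * fm u) = fp u := by
    intro u hu
    have h1 := hprod u hu
    have h2 := hfmpos u hu
    field_simp
    nlinarith
  have hsum : ∀ u : ℝ, fp u + fm u = z + u := by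
    intro u; rw [hfp, hfm]; ring
  -- g values
  have hgp : ∀ u : ℝ, 0 < u → g (fp u) = Real.exp (-(z+u)) := by
    intro u hu
    rw [hg]; simp only
    rw [hkeyp u hu]
    congr 1
    have := hsum u
    linarith
  have hgm : ∀ u : ℝ, 0 < u → g (fm u) = Real.exp (-(z+u)) := by
    intro u hu
    rw [hg]; simp only
    rw [hkeym u hu]
    congr 1
    have := hsum u
    linarith
  -- injectivity
  have hinjp : Set.InjOn fp (Set.Ioi 0) := by
    intro a ha b hb h
    simp only [Set.mem_Ioi] at ha hb
    have e1 : fm a = fm b := by rw [← hkeyp a ha, ← hkeyp b hb, h]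
    have := hsum a
    have := hsum b
    have : fp a + fm a = fp b + fm b := by rw [h, e1]
    linarith [hsum a, hsum b]
  have hinjm : Set.InjOn fm (Set.Ioi 0) := by
    intro a ha b hb h
    simp only [Set.mem_Ioi] at ha hb
    have e1 : fp a = fp b := by rw [← hkeym a ha, ← hkeym b hb, h]
    linarith [hsum a, hsum b, congrArg₂ (· + ·) e1 h]
  -- derivatives
  have hderivr : ∀ u : ℝ, 0 < u → HasDerivAt r ((u+z)/(r u)) u := by
    intro u hu
    have h1 : HasDerivAt (fun u : ℝ => u^2 + 2*u*z) (2*u + 2*z) u := by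
      have h0 := (hasDerivAt_pow 2 u).add (((hasDerivAt_id u).mul_const z).const_mul 2)
      have hfun : (fun v : ℝ => v^2 + 2*v*z) = fun v : ℝ => v^2 + 2*(id v*z) := by
        ext v; simp only [id_eq]; ring
      have hd : (2:ℝ)*u + 2*z = (↑2*u^(2-1)) + 2*(1*z) := by norm_num
      rw [hfun, hd]
      exact h0
    have h2 : (fun v : ℝ => v^2+2*v*z) u ≠ 0 := by simp only; positivity
    have := h1.sqrt h2
    convert this using 1
    rw [hrdef]
    dsimp only
    rw [div_eq_div_iff (by positivity : Real.sqrt (u^2+2*u*z) ≠ 0) (by positivity : (2:ℝ) * Real.sqrt (u^2+2*u*z) ≠ 0)]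
    ring
  have hderivp : ∀ u ∈ Set.Ioi (0:ℝ), HasDerivWithinAt fp ((1 + (u+z)/(r u))/2) (Set.Ioi 0) u := by
    intro u hu
    simp only [Set.mem_Ioi] at hu
    have : HasDerivAt fp ((1 + (u+z)/(r u))/2) u := by
      have := ((hasDerivAt_id u).const_add z |>.add (hderivr u hu)).div_const 2
      convert this using 1
      all_goals rfl
    exact this.hasDerivWithinAt
  have hderivm : ∀ u ∈ Set.Ioi (0:ℝ), HasDerivWithinAt fm ((1 - (u+z)/(r u))/2) (Set.Ioi 0) u := by
    intro u hu
    simp only [Set.mem_Ioi] at hu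
    have : HasDerivAt fm ((1 - (u+z)/(r u))/2) u := by
      have := ((hasDerivAt_id u).const_add z |>.sub (hderivr u hu)).div_const 2
      convert this using 1
      all_goals rfl
    exact this.hasDerivWithinAt
  -- ratio bounds
  have hratio : ∀ u : ℝ, 0 < u → 1 < (u+z)/(r u) := by
    intro u hu
    rw [lt_div_iff₀ (hrpos u hu)]
    simpa using hrlt u hu
  -- images
  have himgp : fp '' Set.Ioi 0 = Set.Ioi (z/2) := by
    ext t
    constructor
    · rintro ⟨u, hu, rfl⟩
      simp only [Set.mem_Ioi] at hu ⊢
      have := hrpos u hu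
      rw [hfp]; simp only; nlinarith
    · intro ht
      simp only [Set.mem_Ioi] at ht
      have ht0 : 0 < t := lt_trans (by positivity) ht
      set u := t + z^2/(4*t) - z with hu
      have hupos : 0 < u := by
        rw [hu]
        have : t + z^2/(4*t) - z = (2*t - z)^2/(4*t) := by field_simp; ring
        rw [this]
        have h2 : (0:ℝ) < 2*t - z := by linarith
        positivity
      refine ⟨u, hupos, ?_⟩
      have hrv : r u = t - z^2/(4*t) := by
        rw [hrdef]; dsimp only
        have he : u^2 + 2*u*z = (t - z^2/(4*t))^2 := by
          rw [hu]; field_simp; ring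
        rw [he]
        apply Real.sqrt_sq
        rw [sub_nonneg, div_le_iff₀ (by positivity)]
        nlinarith
      rw [hfp]; simp only
      rw [hrv, hu]; ring
  have himgm : fm '' Set.Ioi 0 = Set.Ioo 0 (z/2) := by
    ext t
    constructor
    · rintro ⟨u, hu, rfl⟩
      simp only [Set.mem_Ioi] at hu
      constructor
      · exact hfmpos u hu
      · have := hult u hu
        rw [hfm]; simp only; nlinarith
    · rintro ⟨ht0, htz⟩
      set u := t + z^2/(4*t) - z with hu
      have hupos : 0 < u := by
        rw [hu]
        have : t + z^2/(4*t) - z = (2*t - z)^2/(4*t) := by field_simp; ring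
        rw [this]
        have h2 : 2*t - z ≠ 0 := by intro hc; rw [sub_eq_zero] at hc; linarith
        exact div_pos (pow_two_pos_of_ne_zero h2) (by positivity)
      refine ⟨u, hupos, ?_⟩
      have hrv : r u = z^2/(4*t) - t := by
        rw [hrdef]; dsimp only
        have he : u^2 + 2*u*z = (z^2/(4*t) - t)^2 := by
          rw [hu]; field_simp; ring
        rw [he]
        apply Real.sqrt_sq
        rw [sub_nonneg, le_div_iff₀ (by positivity)]
        nlinarith
      rw [hfm]; simp only
      rw [hrv, hu]; field_simp
      ring
  -- change of variables
  have cvp := integral_image_eq_integral_abs_deriv_smul measurableSet_Ioi hderivp hinjp g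
  have cvm := integral_image_eq_integral_abs_deriv_smul measurableSet_Ioi hderivm hinjm g
  rw [himgp] at cvp
  rw [himgm] at cvm
  -- integrands simplification
  have ep : ∀ u ∈ Set.Ioi (0:ℝ), |(1 + (u+z)/(r u))/2| • g (fp u)
      = ((1 + (u+z)/(r u))/2) * Real.exp (-(z+u)) := by
    intro u hu
    simp only [Set.mem_Ioi] at hu
    rw [smul_eq_mul, hgp u hu, abs_of_pos (by linarith [hratio u hu])]
  have em : ∀ u ∈ Set.Ioi (0:ℝ), |(1 - (u+z)/(r u))/2| • g (fm u)
      = (((u+z)/(r u) - 1)/2) * Real.exp (-(z+u)) := by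
    intro u hu
    simp only [Set.mem_Ioi] at hu
    rw [smul_eq_mul, hgm u hu, abs_of_neg (by linarith [hratio u hu] : (1 - (u+z)/(r u))/2 < 0)]
    ring_nf
  -- integrability of the two pieces
  have hgi : IntegrableOn g (Set.Ioi 0) := Jint_integrable
  have hip : IntegrableOn (fun u => |(1 + (u+z)/(r u))/2| • g (fp u)) (Set.Ioi 0) := by
    rw [← integrableOn_image_iff_integrableOn_abs_deriv_smul measurableSet_Ioi hderivp hinjp g,
      himgp]
    exact hgi.mono_set (Set.Ioi_subset_Ioi (by positivity))
  have him : IntegrableOn (fun u => |(1 - (u+z)/(r u))/2| • g (fm u)) (Set.Ioi 0) := by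
    rw [← integrableOn_image_iff_integrableOn_abs_deriv_smul measurableSet_Ioi hderivm hinjm g,
      himgm]
    exact hgi.mono_set (fun x hx => hx.1)
  -- split the domain
  have hsplit : Jint z = (∫ t in Set.Ioo 0 (z/2), g t) + ∫ t in Set.Ioi (z/2), g t := by
    rw [Jint, ← MeasureTheory.integral_Ioc_eq_integral_Ioo]
    rw [← MeasureTheory.setIntegral_union (Set.Ioc_disjoint_Ioi le_rfl) measurableSet_Ioi
      (hgi.mono_set Set.Ioc_subset_Ioi_self) (hgi.mono_set (Set.Ioi_subset_Ioi (by positivity)))]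
    rw [Set.Ioc_union_Ioi_eq_Ioi (by positivity : (0:ℝ) ≤ z/2)]
  rw [hsplit, cvp, cvm,
    MeasureTheory.setIntegral_congr_fun measurableSet_Ioi em,
    MeasureTheory.setIntegral_congr_fun measurableSet_Ioi ep,
    ← MeasureTheory.integral_add]
  · apply MeasureTheory.setIntegral_congr_fun measurableSet_Ioi
    intro u hu
    simp only [Set.mem_Ioi] at hu
    have h1 : r u ≠ 0 := (hrpos u hu).ne'
    dsimp only
    rw [show Real.sqrt (u^2 + 2*u*z) = r u from rfl]
    field_simp
    ring
  · exact (IntegrableOn.congr_fun him em measurableSet_Ioi : _)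
  · exact (IntegrableOn.congr_fun hip ep measurableSet_Ioi : _)
end E3

lemma sq_le_imp {p q : ℝ} (hp : 0 ≤ p) (hq : 0 ≤ q) (h : p^2 ≤ q^2) : p ≤ q := by nlinarith

lemma pointwise_bound {u z : ℝ} (hu : 0 < u) (hz : 0 < z) :
    (u+z) / Real.sqrt (u^2 + 2*u*z) ≤
      Real.sqrt (z/2) * ((Real.sqrt u)⁻¹ + (3/(4*z)) * Real.sqrt u) := by
  have hs : 0 < Real.sqrt (u^2+2*u*z) := Real.sqrt_pos.mpr (by positivity)
  have ha : 0 < Real.sqrt u := Real.sqrt_pos.mpr hu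
  have hc : 0 < Real.sqrt (z/2) := Real.sqrt_pos.mpr (by positivity)
  apply sq_le_imp (by positivity) (by positivity)
  have hs2 : (Real.sqrt (u^2+2*u*z))^2 = u^2+2*u*z := Real.sq_sqrt (by positivity)
  have ha2 : (Real.sqrt u)^2 = u := Real.sq_sqrt hu.le
  have hc2 : (Real.sqrt (z/2))^2 = z/2 := Real.sq_sqrt (by positivity)
  have lhs2 : ((u+z) / Real.sqrt (u^2 + 2*u*z))^2 = (u+z)^2 / (u^2+2*u*z) := by
    rw [div_pow, hs2]
  have rhs2 : (Real.sqrt (z/2) * ((Real.sqrt u)⁻¹ + (3/(4*z)) * Real.sqrt u))^2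
      = (z/2) * (1/u + 3/(2*z) + (9/(16*z^2))*u) := by
    rw [mul_pow]
    rw [hc2]
    congr 1
    have gen : ∀ a k : ℝ, a ≠ 0 → (a⁻¹ + k*a)^2 = (a^2)⁻¹ + 2*k + k^2*a^2 := by
      intro a k hA; field_simp; ring
    rw [gen _ _ ha.ne', ha2]
    field_simp
    ring
  rw [lhs2, rhs2, div_le_iff₀ (by positivity)]
  have expand : z/2 * (1/u + 3/(2*z) + 9/(16*z^2)*u) * (u^2+2*u*z)
      = (u+z)^2 + (9*u^3 + 10*u^2*z)/(32*z) := by field_simp; ring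
  rw [expand]
  have h9 : 0 ≤ (9*u^3 + 10*u^2*z)/(32*z) := by positivity
  linarith

lemma Jint_le {z : ℝ} (hz : 0 < z) :
    Jint z ≤ Real.sqrt (Real.pi/2) * Real.sqrt z * (1 + 3/(8*z)) * Real.exp (-z) := by
  rw [Jint_eq hz]
  set F : ℝ → ℝ := fun u => (Real.exp (-z) * Real.sqrt (z/2)) *
    (Real.exp (-u) * u ^ ((1:ℝ)/2 - 1) + (3/(4*z)) * (Real.exp (-u) * u ^ ((3:ℝ)/2 - 1))) with hF
  have hG1 : IntegrableOn (fun u : ℝ => Real.exp (-u) * u ^ ((1:ℝ)/2 - 1)) (Set.Ioi 0) :=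
    Real.GammaIntegral_convergent (by norm_num : (0:ℝ) < 1/2)
  have hG2 : IntegrableOn (fun u : ℝ => Real.exp (-u) * u ^ ((3:ℝ)/2 - 1)) (Set.Ioi 0) :=
    Real.GammaIntegral_convergent (by norm_num : (0:ℝ) < 3/2)
  have hFint : IntegrableOn F (Set.Ioi 0) := by
    rw [hF]
    exact ((hG1.add (hG2.const_mul _)).const_mul _ : _)
  have hmono : (∫ u in Set.Ioi (0:ℝ), Real.exp (-(z+u)) * ((u+z) / Real.sqrt (u^2 + 2*u*z)))
      ≤ ∫ u in Set.Ioi (0:ℝ), F u := by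
    apply MeasureTheory.integral_mono_of_nonneg
    · filter_upwards [ae_restrict_mem measurableSet_Ioi] with u hu
      simp only [Set.mem_Ioi] at hu
      have : 0 < Real.sqrt (u^2+2*u*z) := Real.sqrt_pos.mpr (by positivity)
      positivity
    · exact hFint
    · filter_upwards [ae_restrict_mem measurableSet_Ioi] with u hu
      simp only [Set.mem_Ioi] at hu
      rw [hF]
      dsimp only
      have e1 : u ^ ((1:ℝ)/2 - 1) = (Real.sqrt u)⁻¹ := by
        rw [show ((1:ℝ)/2 - 1) = -(1/2) by norm_num, Real.rpow_neg hu.le, Real.sqrt_eq_rpow]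
      have e2 : u ^ ((3:ℝ)/2 - 1) = Real.sqrt u := by
        rw [show ((3:ℝ)/2 - 1) = (1/2 : ℝ) by norm_num, Real.sqrt_eq_rpow]
      rw [e1, e2]
      have eexp : Real.exp (-(z+u)) = Real.exp (-z) * Real.exp (-u) := by
        rw [← Real.exp_add]; ring_nf
      rw [eexp]
      have hpt := pointwise_bound hu hz
      have hnn : (0:ℝ) ≤ Real.exp (-z) * Real.exp (-u) := by positivity
      have final := mul_le_mul_of_nonneg_left hpt hnn
      refine le_trans (le_of_eq (by ring)) (le_trans final (le_of_eq (by ring)))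
  have g1 : ∫ u in Set.Ioi (0:ℝ), Real.exp (-u) * u ^ ((1:ℝ)/2-1) = Real.sqrt Real.pi := by
    rw [← Real.Gamma_eq_integral (by norm_num : (0:ℝ) < 1/2)]
    exact Real.Gamma_one_half_eq
  have g2 : ∫ u in Set.Ioi (0:ℝ), Real.exp (-u) * u ^ ((3:ℝ)/2-1) = Real.sqrt Real.pi / 2 := by
    rw [← Real.Gamma_eq_integral (by norm_num : (0:ℝ) < 3/2)]
    rw [show (3:ℝ)/2 = 1/2 + 1 by norm_num, Real.Gamma_add_one (by norm_num),
      Real.Gamma_one_half_eq]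
    ring
  have hFval : ∫ u in Set.Ioi (0:ℝ), F u
      = (Real.exp (-z) * Real.sqrt (z/2)) *
        (Real.sqrt Real.pi + (3/(4*z)) * (Real.sqrt Real.pi / 2)) := by
    rw [hF, MeasureTheory.integral_const_mul]
    congr 1
    rw [MeasureTheory.integral_add hG1 (hG2.const_mul _), MeasureTheory.integral_const_mul,
      g1, g2]
  refine le_trans hmono (le_of_eq ?_)
  rw [hFval, Real.sqrt_div (le_of_lt hz), Real.sqrt_div (le_of_lt Real.pi_pos)]
  have h2 : Real.sqrt 2 ≠ 0 := by positivity
  field_simp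
  ring

lemma besselK1_eq {z : ℝ} (hz : 0 < z) : besselK1 z = Jint z / z := by
  have hz' : z ≠ 0 := hz.ne'
  set f : ℝ → ℝ := fun t => z^2/(4*t) with hf
  have himg : f '' Set.Ioi 0 = Set.Ioi 0 := by
    ext y
    constructor
    · rintro ⟨t, ht, rfl⟩
      simp only [Set.mem_Ioi] at ht ⊢
      positivity
    · intro hy
      simp only [Set.mem_Ioi] at hy
      refine ⟨z^2/(4*y), by simp only [Set.mem_Ioi]; positivity, ?_⟩
      rw [hf]; field_simp
  have hderiv : ∀ t ∈ Set.Ioi (0:ℝ), HasDerivWithinAt f (-(z^2)/(4*t^2)) (Set.Ioi 0) t := by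
    intro t ht
    simp only [Set.mem_Ioi] at ht
    have h1 : HasDerivAt (fun t : ℝ => z^2/(4*t)) (-(z^2)/(4*t^2)) t := by
      have h0 := (hasDerivAt_inv ht.ne').const_mul (z^2/4)
      have e1 : (fun t : ℝ => z^2/(4*t)) = fun y => z^2/4 * y⁻¹ := by ext u; ring
      have e2 : -(z^2)/(4*t^2) = z^2/4 * -(t^2)⁻¹ := by ring
      rw [e1, e2]; exact h0
    exact h1.hasDerivWithinAt
  have hinj : Set.InjOn f (Set.Ioi 0) := by
    intro a ha b hb h
    simp only [Set.mem_Ioi] at ha hb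
    have h2 : z^2/(4 * f a) = z^2/(4 * f b) := by rw [h]
    have e1 : z^2/(4 * f a) = a := by rw [hf]; field_simp
    have e2 : z^2/(4 * f b) = b := by rw [hf]; field_simp
    rw [e1, e2] at h2
    exact h2
  have key := integral_image_eq_integral_abs_deriv_smul measurableSet_Ioi hderiv hinj
    (fun t => (t : ℝ) ^ (-2 : ℤ) * Real.exp (-t - z ^ 2 / (4 * t)))
  rw [himg] at key
  have congr1 : ∫ t in Set.Ioi (0:ℝ), |(-(z^2)/(4*t^2))| •
      ((f t) ^ (-2 : ℤ) * Real.exp (-(f t) - z ^ 2 / (4 * (f t))))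
      = ∫ t in Set.Ioi (0:ℝ), (4/z^2) * Real.exp (-t - z^2/(4*t)) := by
    apply setIntegral_congr_fun measurableSet_Ioi
    intro t ht
    simp only [Set.mem_Ioi] at ht
    dsimp only
    have h4 : z ^ 2 / (4 * f t) = t := by rw [hf]; field_simp
    rw [h4, smul_eq_mul, abs_div, abs_neg, abs_of_nonneg (by positivity : (0:ℝ) ≤ z^2),
      abs_of_nonneg (by positivity : (0:ℝ) ≤ 4*t^2)]
    have : (f t) ^ (-2 : ℤ) = (4*t)^2/(z^2)^2 := by
      rw [hf]; rw [zpow_neg, zpow_two]; field_simp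
    rw [this, hf]
    have hexp : -(z ^ 2 / (4 * t)) - t = -t - z^2/(4*t) := by ring
    rw [hexp]
    field_simp
  rw [besselK1, key, congr1, MeasureTheory.integral_const_mul, Jint]
  field_simp


theorem stmt7 {H : Type*} [NormedAddCommGroup H] [InnerProductSpace ℂ H] [CompleteSpace H]
    (A B R : H →L[ℂ] H) (T : ℝ → H →L[ℂ] H)
    (s E δ : ℝ) (hδ : 0 < δ) (hE : E < s)
    (hT : ∀ t : ℝ, 0 < t →
      ‖A.comp ((T t).comp B)‖ ≤ Real.exp (-t * s) * Real.exp (-δ ^ 2 / (4 * t)))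
    (hmeas : AEStronglyMeasurable
      (fun t : ℝ => (Real.exp (t * E) : ℂ) • (A.comp ((T t).comp B)))
      (volume.restrict (Set.Ioi (0 : ℝ))))
    (hR : A.comp (R.comp B)
      = ∫ t in Set.Ioi (0 : ℝ), (Real.exp (t * E) : ℂ) • (A.comp ((T t).comp B))) :
    ‖A.comp (R.comp B)‖ ≤ (δ / Real.sqrt (s - E)) * besselK1 (δ * Real.sqrt (s - E)) ∧
    ‖A.comp (R.comp B)‖ ≤ Real.sqrt (Real.pi / 2) *
      (Real.sqrt δ / (s - E) ^ ((3 : ℝ) / 4) + 3 / (8 * Real.sqrt δ * (s - E) ^ ((5 : ℝ) / 4))) *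
      Real.exp (-δ * Real.sqrt (s - E)) := by
  set η := s - E with hη
  have hηpos : 0 < η := by rw [hη]; linarith
  have hsq : 0 < Real.sqrt η := Real.sqrt_pos.mpr hηpos
  set z := δ * Real.sqrt η with hzdef
  have hzpos : 0 < z := by positivity
  have hz2 : z^2 = δ^2 * η := by
    rw [hzdef, mul_pow, Real.sq_sqrt hηpos.le]
  -- Step 1: bound the norm by the integral of the pointwise bound
  have step1 : ‖A.comp (R.comp B)‖ ≤ ∫ t in Set.Ioi (0:ℝ), Real.exp (-(η*t) - δ^2/(4*t)) := by
    rw [hR]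
    apply MeasureTheory.norm_integral_le_of_norm_le (aux_int hηpos (sq_nonneg δ))
    filter_upwards [ae_restrict_mem measurableSet_Ioi] with t ht
    simp only [Set.mem_Ioi] at ht
    rw [norm_smul]
    have h1 : ‖(Real.exp (t*E) : ℂ)‖ = Real.exp (t*E) := by
      rw [Complex.norm_real, Real.norm_eq_abs, abs_of_pos (Real.exp_pos _)]
    rw [h1]
    calc Real.exp (t*E) * ‖A.comp ((T t).comp B)‖
        ≤ Real.exp (t*E) * (Real.exp (-t * s) * Real.exp (-δ ^ 2 / (4 * t))) := by
          exact mul_le_mul_of_nonneg_left (hT t ht) (Real.exp_nonneg _)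
      _ = Real.exp (-(η*t) - δ^2/(4*t)) := by
          rw [← Real.exp_add, ← Real.exp_add]
          congr 1
          rw [hη]
          ring
  -- Step 2: rescale the integral
  have step2 : ∫ t in Set.Ioi (0:ℝ), Real.exp (-(η*t) - δ^2/(4*t)) = η⁻¹ * Jint z := by
    have hcv := integral_comp_mul_left_Ioi (fun t => Real.exp (-t - z^2/(4*t))) 0 hηpos
    simp only [mul_zero, smul_eq_mul] at hcv
    rw [Jint, ← hcv]
    apply MeasureTheory.setIntegral_congr_fun measurableSet_Ioi
    intro t ht
    simp only [Set.mem_Ioi] at ht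
    dsimp only
    congr 1
    rw [hz2]
    field_simp
  have hss : Real.sqrt η * Real.sqrt η = η := Real.mul_self_sqrt hηpos.le
  have part1 : ‖A.comp (R.comp B)‖ ≤ (δ / Real.sqrt η) * besselK1 z := by
    rw [besselK1_eq hzpos]
    refine le_trans step1 (le_of_eq ?_)
    rw [step2]
    have h2 : Real.sqrt η * z = δ * η := by
      rw [hzdef]
      calc Real.sqrt η * (δ * Real.sqrt η) = δ * (Real.sqrt η * Real.sqrt η) := by ring
        _ = δ * η := by rw [hss]
    rw [div_mul_div_comm, h2, eq_div_iff (by positivity : δ*η ≠ 0)]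
    field_simp
  refine ⟨part1, ?_⟩
  -- Part 2
  have step3 : ‖A.comp (R.comp B)‖ ≤ η⁻¹ * (Real.sqrt (Real.pi/2) * Real.sqrt z
      * (1 + 3/(8*z)) * Real.exp (-z)) := by
    refine le_trans step1 (le_trans (le_of_eq step2) ?_)
    exact mul_le_mul_of_nonneg_left (Jint_le hzpos) (by positivity)
  refine le_trans step3 (le_of_eq ?_)
  set p := Real.sqrt (Real.sqrt η) with hpdef
  set q := Real.sqrt δ with hqdef
  have hp : 0 < p := Real.sqrt_pos.mpr hsq
  have hq : 0 < q := Real.sqrt_pos.mpr hδ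
  have hp2 : p^2 = Real.sqrt η := Real.sq_sqrt (Real.sqrt_nonneg _)
  have hq2 : q^2 = δ := Real.sq_sqrt hδ.le
  have hp4 : p^4 = η := by
    calc p^4 = (p^2)^2 := by ring
      _ = (Real.sqrt η)^2 := by rw [hp2]
      _ = η := Real.sq_sqrt hηpos.le
  have h34 : η ^ ((3:ℝ)/4) = p^3 := by
    rw [← hp4, ← Real.rpow_natCast p 4, ← Real.rpow_mul hp.le]
    norm_num
  have h54 : η ^ ((5:ℝ)/4) = p^5 := by
    rw [← hp4, ← Real.rpow_natCast p 4, ← Real.rpow_mul hp.le]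
    norm_num
  have hzsqrt : Real.sqrt z = q * p := by
    rw [hzdef, Real.sqrt_mul hδ.le, hqdef, hpdef]
  have hzqp : z = q^2 * p^2 := by rw [hzdef, ← hq2, ← hp2]
  have hexp : -δ * Real.sqrt η = -z := by rw [hzdef]; ring
  rw [h34, h54, hexp, hzsqrt]
  rw [show η⁻¹ = (p^4)⁻¹ by rw [hp4]]
  rw [hzqp]
  field_simp
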